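/- Each of the four K-Knuth generating relations preserves the length of the longest strictly increasing subsequence: if w2 is obtained from w1 by one application of xzy → zxy (x<y<z), yxz → yzx (x<y<z), x → xx, or xyx → yxy (in arbitrary context), then lis(w1) = lis(w2). -/

import Mathlib

/-- One application, inside an arbitrary context, of a K-Knuth generating relation:
`xzy ≡ zxy` and `yxz ≡ yzx` for `x < y < z`, `x ≡ xx`, and `xyx ≡ yxy`. -/
inductive KKnuthRel : List ℕ+ → List ℕ+ → Prop
  | rel1 (u v : List ℕ+) (x y z : ℕ+) (h1 : x < y) (h2 : y < z) :
      KKnuthRel (u ++ [x, z, y] ++ v) (u ++ [z, x, y] ++ v)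
  | rel2 (u v : List ℕ+) (x y z : ℕ+) (h1 : x < y) (h2 : y < z) :
      KKnuthRel (u ++ [y, x, z] ++ v) (u ++ [y, z, x] ++ v)
  | rel3 (u v : List ℕ+) (x : ℕ+) :
      KKnuthRel (u ++ [x] ++ v) (u ++ [x, x] ++ v)
  | rel4 (u v : List ℕ+) (x y : ℕ+) :
      KKnuthRel (u ++ [x, y, x] ++ v) (u ++ [y, x, y] ++ v)

/-- K-Knuth equivalence of words: the equivalence closure of the generating moves. -/
def KKnuth : List ℕ+ → List ℕ+ → Prop := Relation.EqvGen KKnuthRel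

/-- Length of the longest strictly increasing subsequence of a word. -/
def lis (w : List ℕ+) : ℕ :=
  ((w.sublists.filter fun s => decide (List.IsChain (· < ·) s)).map List.length).foldr max 0

/-- Length of the longest strictly decreasing subsequence of a word. -/
def lds (w : List ℕ+) : ℕ :=
  ((w.sublists.filter fun s => decide (List.IsChain (· > ·) s)).map List.length).foldr max 0

namespace KKAux

lemma foldr_max_spec (l : List ℕ) : l.foldr max 0 = 0 ∨ l.foldr max 0 ∈ l := by
  induction l with
  | nil => left; rfl
  | cons x t ih =>
    rcases max_choice x (t.foldr max 0) with h | h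
    · right; simp [List.foldr_cons, h]
    · rcases ih with h0 | hm
      · left; simpa [List.foldr_cons, h] using h0
      · right; simp only [List.foldr_cons, h]; exact List.mem_cons_of_mem _ hm

lemma le_foldr_max {l : List ℕ} {x : ℕ} (hx : x ∈ l) : x ≤ l.foldr max 0 := by
  induction l with
  | nil => cases hx
  | cons y t ih =>
    rcases List.mem_cons.1 hx with rfl | h
    · exact le_max_left _ _
    · exact le_trans (ih h) (le_max_right _ _)

lemma le_lis {s w : List ℕ+} (hs : s.Sublist w) (hc : List.IsChain (· < ·) s) :
    s.length ≤ lis w := by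
  apply le_foldr_max
  exact List.mem_map_of_mem (List.mem_filter.2 ⟨List.mem_sublists.2 hs, by simpa using hc⟩)

lemma lis_spec (w : List ℕ+) :
    ∃ s : List ℕ+, s.Sublist w ∧ List.IsChain (· < ·) s ∧ lis w = s.length := by
  rcases foldr_max_spec ((w.sublists.filter fun s => decide (List.IsChain (· < ·) s)).map
      List.length) with h | h
  · exact ⟨[], List.nil_sublist w, List.isChain_nil, h⟩
  · rcases List.mem_map.1 h with ⟨s, hs, hlen⟩
    rcases List.mem_filter.1 hs with ⟨hs1, hs2⟩
    exact ⟨s, List.mem_sublists.1 hs1, by simpa using hs2, hlen.symm⟩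

/-- `b'` dominates `b`. -/
def Dom (b b' : List ℕ+) : Prop :=
  b.length ≤ b'.length ∧ (b = [] → b' = []) ∧
    (∀ p ∈ b.head?, ∀ q ∈ b'.head?, p ≤ q) ∧
    (∀ p ∈ b.getLast?, ∀ q ∈ b'.getLast?, q ≤ p)

lemma dom_refl (b : List ℕ+) : Dom b b := by
  refine ⟨le_refl _, fun h => h, ?_, ?_⟩ <;>
    · intro p hp q hq
      rw [Option.mem_def] at hp hq
      rw [hp] at hq
      obtain rfl := Option.some_injective _ hq
      exact le_refl _

lemma lis_mono_mid (u v m1 m2 : List ℕ+)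
    (H : ∀ b : List ℕ+, b.Sublist m1 → List.IsChain (· < ·) b →
      ∃ b' : List ℕ+, b'.Sublist m2 ∧ List.IsChain (· < ·) b' ∧ Dom b b') :
    lis (u ++ m1 ++ v) ≤ lis (u ++ m2 ++ v) := by
  obtain ⟨s, hsub, hch, hlen⟩ := lis_spec (u ++ m1 ++ v)
  rw [hlen]
  rcases List.sublist_append_iff.1 hsub with ⟨t, c, rfl, ht, hcv⟩
  rcases List.sublist_append_iff.1 ht with ⟨a, b, rfl, hau, hbm⟩
  have hch' : List.IsChain (· < ·) (a ++ (b ++ c)) := by simpa [List.append_assoc] using hch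
  rw [List.isChain_append] at hch'
  obtain ⟨hca, hcbc, hb1⟩ := hch'
  rw [List.isChain_append] at hcbc
  obtain ⟨hcb, hcc, hb2⟩ := hcbc
  obtain ⟨b', hb'm, hcb', hdom⟩ := H b hbm hcb
  have hblen : b.length ≤ b'.length := hdom.1
  have hbe : b = [] → b' = [] := hdom.2.1
  have hbe' : b' = [] → b = [] := by
    intro h; rw [h] at hblen; exact List.length_eq_zero_iff.1 (Nat.le_zero.1 hblen)
  have hch2 : List.IsChain (· < ·) (a ++ (b' ++ c)) := by
    rw [List.isChain_append, List.isChain_append]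
    refine ⟨hca, ⟨hcb', hcc, ?_⟩, ?_⟩
    · intro p hp q hq
      have hbne' : b' ≠ [] := by rintro rfl; simp at hp
      have hbne : b ≠ [] := fun h => hbne' (hbe h)
      have h1 : p ≤ b.getLast hbne :=
        hdom.2.2.2 _ (by rw [List.getLast?_eq_getLast hbne]; rfl) p hp
      exact lt_of_le_of_lt h1
        (hb2 _ (by rw [List.getLast?_eq_getLast hbne]; rfl) q hq)
    · intro p hp q hq
      rcases eq_or_ne b' [] with rfl | hbne'
      · have hb0 : b = [] := hbe' rfl
        subst hb0
        exact hb1 p hp q (by simpa using hq)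
      · have hbne : b ≠ [] := fun h => hbne' (hbe h)
        have he1 : (b' ++ c).head? = b'.head? := by
          rcases b' with _ | ⟨e, t⟩
          · exact absurd rfl hbne'
          · rfl
        have hq' : q ∈ b'.head? := he1 ▸ hq
        have h2 : b.head hbne ≤ q :=
          hdom.2.2.1 _ (by rw [List.head?_eq_head hbne]; rfl) q hq'
        have he2 : (b ++ c).head? = b.head? := by
          rcases b with _ | ⟨e, t⟩
          · exact absurd rfl hbne
          · rfl
        have hpq : p < b.head hbne :=
          hb1 p hp _ (by rw [he2, List.head?_eq_head hbne]; rfl)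
        exact lt_of_lt_of_le hpq h2
  have hsub2 : List.Sublist (a ++ b' ++ c) (u ++ m2 ++ v) :=
    List.Sublist.append (List.Sublist.append hau hb'm) hcv
  calc (a ++ b ++ c).length = a.length + b.length + c.length := by
        simp only [List.length_append]
    _ ≤ a.length + b'.length + c.length := by omega
    _ = (a ++ b' ++ c).length := by simp only [List.length_append]
    _ ≤ lis (u ++ m2 ++ v) := le_lis hsub2 (by simpa [List.append_assoc] using hch2)

end KKAux

theorem kKnuthRel_lis (w1 w2 : List ℕ+) (h : KKnuthRel w1 w2) :
    lis w1 = lis w2 := by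
  cases h with
  | rel1 u v x y z h1 h2 =>
    refine le_antisymm (KKAux.lis_mono_mid u v _ _ ?_) (KKAux.lis_mono_mid u v _ _ ?_)
    · intro b hb hc
      simp only [List.sublist_cons_iff, List.sublist_nil] at hb
      rcases hb with ((rfl | ⟨r, rfl, rfl⟩) | ⟨r, rfl, (rfl | ⟨r1, rfl, rfl⟩)⟩) |
        ⟨r, rfl, ((rfl | ⟨r1, rfl, rfl⟩) | ⟨r1, rfl, (rfl | ⟨r2, rfl, rfl⟩)⟩)⟩
      · exact ⟨[], List.nil_sublist _, List.isChain_nil, KKAux.dom_refl _⟩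
      · exact ⟨[y], .cons _ (.cons _ (.refl _)), hc, KKAux.dom_refl _⟩
      · exact ⟨[z], .cons₂ _ (List.nil_sublist _), hc, KKAux.dom_refl _⟩
      · simp at hc; exact (lt_asymm h2 hc).elim
      · exact ⟨[x], .cons _ (.cons₂ _ (List.nil_sublist _)), hc, KKAux.dom_refl _⟩
      · exact ⟨[x, y], .cons _ (.refl _), hc, KKAux.dom_refl _⟩
      · exact ⟨[x, y], .cons _ (.refl _), by simp [h1], by simp [KKAux.Dom, h2.le]⟩
      · simp at hc; exact (lt_asymm h2 hc.2).elim
    · intro b hb hc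
      simp only [List.sublist_cons_iff, List.sublist_nil] at hb
      rcases hb with ((rfl | ⟨r, rfl, rfl⟩) | ⟨r, rfl, (rfl | ⟨r1, rfl, rfl⟩)⟩) |
        ⟨r, rfl, ((rfl | ⟨r1, rfl, rfl⟩) | ⟨r1, rfl, (rfl | ⟨r2, rfl, rfl⟩)⟩)⟩
      · exact ⟨[], List.nil_sublist _, List.isChain_nil, KKAux.dom_refl _⟩
      · exact ⟨[y], .cons _ (.cons _ (.refl _)), hc, KKAux.dom_refl _⟩
      · exact ⟨[x], .cons₂ _ (List.nil_sublist _), hc, KKAux.dom_refl _⟩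
      · exact ⟨[x, y], .cons₂ _ (.cons _ (.refl _)), hc, KKAux.dom_refl _⟩
      · exact ⟨[z], .cons _ (.cons₂ _ (List.nil_sublist _)), hc, KKAux.dom_refl _⟩
      · simp at hc; exact (lt_asymm h2 hc).elim
      · simp at hc; exact (lt_asymm (h1.trans h2) hc).elim
      · simp at hc; exact (lt_asymm (h1.trans h2) hc.1).elim
  | rel2 u v x y z h1 h2 =>
    refine le_antisymm (KKAux.lis_mono_mid u v _ _ ?_) (KKAux.lis_mono_mid u v _ _ ?_)
    · intro b hb hc
      simp only [List.sublist_cons_iff, List.sublist_nil] at hb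
      rcases hb with ((rfl | ⟨r, rfl, rfl⟩) | ⟨r, rfl, (rfl | ⟨r1, rfl, rfl⟩)⟩) |
        ⟨r, rfl, ((rfl | ⟨r1, rfl, rfl⟩) | ⟨r1, rfl, (rfl | ⟨r2, rfl, rfl⟩)⟩)⟩
      · exact ⟨[], List.nil_sublist _, List.isChain_nil, KKAux.dom_refl _⟩
      · exact ⟨[z], .cons _ (.cons₂ _ (List.nil_sublist _)), hc, KKAux.dom_refl _⟩
      · exact ⟨[x], .cons _ (.cons _ (.refl _)), hc, KKAux.dom_refl _⟩
      · exact ⟨[y, z], .cons₂ _ (.cons₂ _ (List.nil_sublist _)), by simp [h2],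
          by simp [KKAux.Dom, h1.le]⟩
      · exact ⟨[y], .cons₂ _ (List.nil_sublist _), hc, KKAux.dom_refl _⟩
      · exact ⟨[y, z], .cons₂ _ (.cons₂ _ (List.nil_sublist _)), hc, KKAux.dom_refl _⟩
      · simp at hc; exact (lt_asymm h1 hc).elim
      · simp at hc; exact (lt_asymm h1 hc.1).elim
    · intro b hb hc
      simp only [List.sublist_cons_iff, List.sublist_nil] at hb
      rcases hb with ((rfl | ⟨r, rfl, rfl⟩) | ⟨r, rfl, (rfl | ⟨r1, rfl, rfl⟩)⟩) |
        ⟨r, rfl, ((rfl | ⟨r1, rfl, rfl⟩) | ⟨r1, rfl, (rfl | ⟨r2, rfl, rfl⟩)⟩)⟩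
      · exact ⟨[], List.nil_sublist _, List.isChain_nil, KKAux.dom_refl _⟩
      · exact ⟨[x], .cons _ (.cons₂ _ (List.nil_sublist _)), hc, KKAux.dom_refl _⟩
      · exact ⟨[z], .cons _ (.cons _ (.refl _)), hc, KKAux.dom_refl _⟩
      · simp at hc; exact (lt_asymm (h1.trans h2) hc).elim
      · exact ⟨[y], .cons₂ _ (List.nil_sublist _), hc, KKAux.dom_refl _⟩
      · simp at hc; exact (lt_asymm h1 hc).elim
      · exact ⟨[y, z], .cons₂ _ (.cons _ (.refl _)), hc, KKAux.dom_refl _⟩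
      · simp at hc; exact (lt_asymm (h1.trans h2) hc.2).elim
  | rel3 u v x =>
    refine le_antisymm (KKAux.lis_mono_mid u v _ _ ?_) (KKAux.lis_mono_mid u v _ _ ?_)
    · intro b hb hc
      simp only [List.sublist_cons_iff, List.sublist_nil] at hb
      rcases hb with rfl | ⟨r, rfl, rfl⟩
      · exact ⟨[], List.nil_sublist _, List.isChain_nil, KKAux.dom_refl _⟩
      · exact ⟨[x], .cons _ (.refl _), hc, KKAux.dom_refl _⟩
    · intro b hb hc
      simp only [List.sublist_cons_iff, List.sublist_nil] at hb
      rcases hb with (rfl | ⟨r, rfl, rfl⟩) | ⟨r, rfl, (rfl | ⟨r1, rfl, rfl⟩)⟩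
      · exact ⟨[], List.nil_sublist _, List.isChain_nil, KKAux.dom_refl _⟩
      · exact ⟨[x], .refl _, hc, KKAux.dom_refl _⟩
      · exact ⟨[x], .refl _, hc, KKAux.dom_refl _⟩
      · simp at hc
  | rel4 u v x y =>
    refine le_antisymm (KKAux.lis_mono_mid u v _ _ ?_) (KKAux.lis_mono_mid u v _ _ ?_)
    · intro b hb hc
      simp only [List.sublist_cons_iff, List.sublist_nil] at hb
      rcases hb with ((rfl | ⟨r, rfl, rfl⟩) | ⟨r, rfl, (rfl | ⟨r1, rfl, rfl⟩)⟩) |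
        ⟨r, rfl, ((rfl | ⟨r1, rfl, rfl⟩) | ⟨r1, rfl, (rfl | ⟨r2, rfl, rfl⟩)⟩)⟩
      · exact ⟨[], List.nil_sublist _, List.isChain_nil, KKAux.dom_refl _⟩
      · exact ⟨[x], .cons _ (.cons₂ _ (List.nil_sublist _)), hc, KKAux.dom_refl _⟩
      · exact ⟨[y], .cons₂ _ (List.nil_sublist _), hc, KKAux.dom_refl _⟩
      · exact ⟨[y, x], .cons₂ _ (.cons₂ _ (List.nil_sublist _)), hc, KKAux.dom_refl _⟩
      · exact ⟨[x], .cons _ (.cons₂ _ (List.nil_sublist _)), hc, KKAux.dom_refl _⟩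
      · exact ⟨[x, x], by simpa using hc, hc, KKAux.dom_refl _⟩
      · exact ⟨[x, y], .cons _ (.refl _), hc, KKAux.dom_refl _⟩
      · simp at hc; exact (lt_asymm hc.1 hc.2).elim
    · intro b hb hc
      simp only [List.sublist_cons_iff, List.sublist_nil] at hb
      rcases hb with ((rfl | ⟨r, rfl, rfl⟩) | ⟨r, rfl, (rfl | ⟨r1, rfl, rfl⟩)⟩) |
        ⟨r, rfl, ((rfl | ⟨r1, rfl, rfl⟩) | ⟨r1, rfl, (rfl | ⟨r2, rfl, rfl⟩)⟩)⟩
      · exact ⟨[], List.nil_sublist _, List.isChain_nil, KKAux.dom_refl _⟩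
      · exact ⟨[y], .cons _ (.cons₂ _ (List.nil_sublist _)), hc, KKAux.dom_refl _⟩
      · exact ⟨[x], .cons₂ _ (List.nil_sublist _), hc, KKAux.dom_refl _⟩
      · exact ⟨[x, y], .cons₂ _ (.cons₂ _ (List.nil_sublist _)), hc, KKAux.dom_refl _⟩
      · exact ⟨[y], .cons _ (.cons₂ _ (List.nil_sublist _)), hc, KKAux.dom_refl _⟩
      · exact ⟨[y, y], by simpa using hc, hc, KKAux.dom_refl _⟩
      · exact ⟨[y, x], .cons _ (.refl _), hc, KKAux.dom_refl _⟩
      · simp at hc; exact (lt_asymm hc.1 hc.2).elim
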